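/- Let X be a set, C a concept class on X, and H a hypothesis class with C ⊆ H ⊆ P(X). Suppose Ldim(C) = d < ∞ and SC(C, H) = 2. Then LC^EQ(C, H) = d + 1. -/

import Mathlib

/-!
Definitions for query learning: concepts are total functions `X → Bool`,
partially specified subsets are functions `X → Option Bool`.
-/

/-- A total concept `f` extends the partially specified subset `A`
(i.e. agrees with `A` on its domain). -/
def PExtends {X : Type*} (f : X → Bool) (A : X → Option Bool) : Prop :=
  ∀ x b, A x = some b → f x = b

/-- `A` is `n`-consistent with `C`: every restriction of `A` of size at most `n`
has an extension in `C`. -/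
def NConsistent {X : Type*} (C : Set (X → Bool)) (A : X → Option Bool) (n : ℕ) : Prop :=
  ∀ s : Finset X, s.card ≤ n → ∃ f ∈ C, ∀ x ∈ s, ∀ b, A x = some b → f x = b

/-- `A` is finitely consistent with `C`: every finite restriction of `A`
has an extension in `C`. -/
def FinitelyConsistent {X : Type*} (C : Set (X → Bool)) (A : X → Option Bool) : Prop :=
  ∀ s : Finset X, ∃ f ∈ C, ∀ x ∈ s, ∀ b, A x = some b → f x = b

/-- There is a complete binary tree of height `d`, with internal nodes labelled by
elements of `X` (here indexed by the binary path leading to the node), whose leaves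
can each be properly labelled by a concept of `C` agreeing with the root-to-leaf path. -/
def LdimGe {X : Type*} (C : Set (X → Bool)) (d : ℕ) : Prop :=
  ∃ t : List Bool → X, ∀ σ : List Bool, σ.length = d →
    ∃ f ∈ C, ∀ k, k < d → f (t (σ.take k)) = σ.getD k false

/-- The Littlestone dimension of `C`, valued in `ℕ∞` (`⊤` = no maximum exists). -/
noncomputable def Ldim {X : Type*} (C : Set (X → Bool)) : ℕ∞ :=
  sSup {n : ℕ∞ | ∃ d : ℕ, n = d ∧ LdimGe C d}

/-- `xs` is a valid sequence of counterexamples that an adversarial teacher with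
target concept `A` can return against the learner strategy `s` (the learner's next
hypothesis is a function of the list of counterexamples received so far). -/
def ValidEQPlay {X : Type*} (A : X → Bool) (s : List X → (X → Bool)) (xs : List X) : Prop :=
  ∀ (i : ℕ) (h : i < xs.length),
    s (xs.take i) (xs.get ⟨i, h⟩) ≠ A (xs.get ⟨i, h⟩)

/-- Some learner strategy with hypotheses from `H` identifies every concept of `C`
in at most `n` equivalence queries, against every teacher. -/
def EQLearnIn {X : Type*} (C H : Set (X → Bool)) (n : ℕ) : Prop :=
  ∃ s : List X → (X → Bool), (∀ l, s l ∈ H) ∧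
    ∀ A ∈ C, ∀ xs : List X, ValidEQPlay A s xs → xs.length < n

/-- The equivalence-query learning complexity `LC^EQ(C, H)`, valued in `ℕ∞`. -/
noncomputable def LCEQ {X : Type*} (C H : Set (X → Bool)) : ℕ∞ :=
  sInf {n : ℕ∞ | ∃ m : ℕ, n = m ∧ EQLearnIn C H m}

/-- `xs` is a valid play of a teacher with target `A` against the EQ+MQ learner
strategy `s`: the history records pairs `(x, A x)`; at each step, if the learner
makes the membership query `x` the teacher answers `(x, A x)`, and if the learner
makes an equivalence query `B` the teacher returns a counterexample to `B`. -/
def ValidEMPlay {X : Type*} (A : X → Bool) (s : List (X × Bool) → X ⊕ (X → Bool))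
    (xs : List (X × Bool)) : Prop :=
  ∀ (i : ℕ) (h : i < xs.length),
    (xs.get ⟨i, h⟩).2 = A (xs.get ⟨i, h⟩).1 ∧
    (∀ x, s (xs.take i) = Sum.inl x → (xs.get ⟨i, h⟩).1 = x) ∧
    (∀ B, s (xs.take i) = Sum.inr B → B (xs.get ⟨i, h⟩).1 ≠ A (xs.get ⟨i, h⟩).1)

/-- Some learner strategy making membership queries on elements of `X` and
equivalence queries from `H` identifies every concept of `C` in at most `n`
queries in total, against every teacher. -/
def EMLearnIn {X : Type*} (C H : Set (X → Bool)) (n : ℕ) : Prop :=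
  ∃ s : List (X × Bool) → X ⊕ (X → Bool),
    (∀ l B, s l = Sum.inr B → B ∈ H) ∧
    ∀ A ∈ C, ∀ xs : List (X × Bool), ValidEMPlay A s xs → xs.length < n

/-- The EQ+MQ learning complexity `LC^{EQ+MQ}(C, H)`, valued in `ℕ∞`. -/
noncomputable def LCEM {X : Type*} (C H : Set (X → Bool)) : ℕ∞ :=
  sInf {n : ℕ∞ | ∃ m : ℕ, n = m ∧ EMLearnIn C H m}

/-- Every total function `X → Bool` that is `n`-consistent with `C` belongs to `H`. -/
def CDimLe {X : Type*} (C H : Set (X → Bool)) (n : ℕ) : Prop :=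
  ∀ A : X → Bool, NConsistent C (fun x => some (A x)) n → A ∈ H

/-- The consistency dimension `C(C, H)`, valued in `ℕ∞`. -/
noncomputable def CDim {X : Type*} (C H : Set (X → Bool)) : ℕ∞ :=
  sInf {n : ℕ∞ | ∃ m : ℕ, n = m ∧ CDimLe C H m}

/-- Every partially specified subset that is `n`-consistent with `C` has a total
extension in `H`. -/
def SCDimLe {X : Type*} (C H : Set (X → Bool)) (n : ℕ) : Prop :=
  ∀ A : X → Option Bool, NConsistent C A n → ∃ B ∈ H, PExtends B A

/-- The strong consistency dimension `SC(C, H)`, valued in `ℕ∞`. -/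
noncomputable def SCDim {X : Type*} (C H : Set (X → Bool)) : ℕ∞ :=
  sInf {n : ℕ∞ | ∃ m : ℕ, n = m ∧ SCDimLe C H m}


namespace Stmt13Aux

variable {X : Type*}

lemma ldimGe_mono_set {C C' : Set (X → Bool)} (h : C ⊆ C') {k : ℕ} (hk : LdimGe C k) :
    LdimGe C' k := by
  obtain ⟨t, ht⟩ := hk
  exact ⟨t, fun σ hσ => by obtain ⟨f, hf, h2⟩ := ht σ hσ; exact ⟨f, h hf, h2⟩⟩

lemma ldimGe_mono_nat {C : Set (X → Bool)} {k k' : ℕ} (hkk : k ≤ k') (hk : LdimGe C k') :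
    LdimGe C k := by
  obtain ⟨t, ht⟩ := hk
  refine ⟨t, fun σ hσ => ?_⟩
  obtain ⟨f, hf, h2⟩ := ht (σ ++ List.replicate (k' - k) false) (by simp [hσ]; omega)
  refine ⟨f, hf, fun j hj => ?_⟩
  have hjσ : j ≤ σ.length := by omega
  have h1 : (σ ++ List.replicate (k' - k) false).take j = σ.take j :=
    List.take_append_of_le_length hjσ
  have h2' := h2 j (by omega)
  rw [h1] at h2'
  rw [h2']
  exact List.getD_append _ _ _ _ (by omega)

lemma ldimGe_zero (x₀ : X) {C : Set (X → Bool)} (hC : C.Nonempty) : LdimGe C 0 :=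
  ⟨fun _ => x₀, fun _ _ => ⟨hC.choose, hC.choose_spec, fun k hk => by omega⟩⟩

lemma nonempty_of_ldimGe_zero {C : Set (X → Bool)} (h : LdimGe C 0) : C.Nonempty := by
  obtain ⟨t, ht⟩ := h
  obtain ⟨f, hf, _⟩ := ht [] rfl
  exact ⟨f, hf⟩

def Vres (V : Set (X → Bool)) (x : X) (b : Bool) : Set (X → Bool) := {f ∈ V | f x = b}

lemma vres_subset (V : Set (X → Bool)) (x : X) (b : Bool) : Vres V x b ⊆ V :=
  fun _ hf => hf.1

lemma ldimGe_succ {V : Set (X → Bool)} {x : X} {k : ℕ}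
    (h0 : LdimGe (Vres V x true) k) (h1 : LdimGe (Vres V x false) k) :
    LdimGe V (k + 1) := by
  obtain ⟨t0, ht0⟩ := h0
  obtain ⟨t1, ht1⟩ := h1
  refine ⟨fun σ => match σ with
    | [] => x
    | true :: τ => t0 τ
    | false :: τ => t1 τ, fun σ hσ => ?_⟩
  match σ, hσ with
  | b :: τ, hσ =>
    have hτ : τ.length = k := by simpa using hσ
    cases b with
    | false =>
      obtain ⟨f, hf, h2⟩ := ht1 τ hτ
      refine ⟨f, hf.1, fun j hj => ?_⟩
      match j with
      | 0 => simpa using hf.2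
      | j + 1 => simpa using h2 j (by omega)
    | true =>
      obtain ⟨f, hf, h2⟩ := ht0 τ hτ
      refine ⟨f, hf.1, fun j hj => ?_⟩
      match j with
      | 0 => simpa using hf.2
      | j + 1 => simpa using h2 j (by omega)

open scoped Classical in
noncomputable def mu (d : ℕ) (V : Set (X → Bool)) : ℕ :=
  ((Finset.range (d + 1)).filter fun k => LdimGe V k).card

lemma mu_le {d : ℕ} {V : Set (X → Bool)} {k : ℕ} (hk : ¬ LdimGe V k) : mu d V ≤ k := by
  classical
  have hsub : ((Finset.range (d + 1)).filter fun j => LdimGe V j) ⊆ Finset.range k := by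
    intro j hj
    simp only [Finset.mem_filter, Finset.mem_range] at hj ⊢
    by_contra hjk
    exact hk (ldimGe_mono_nat (by omega) hj.2)
  simpa [mu] using (Finset.card_le_card hsub).trans (by simp)

lemma le_mu {d : ℕ} {V : Set (X → Bool)} {k : ℕ} (hk : LdimGe V k) (hkd : k ≤ d) :
    k + 1 ≤ mu d V := by
  classical
  have hsub : Finset.range (k + 1) ⊆ ((Finset.range (d + 1)).filter fun j => LdimGe V j) := by
    intro j hj
    simp only [Finset.mem_filter, Finset.mem_range] at hj ⊢
    exact ⟨by omega, ldimGe_mono_nat (by omega) hk⟩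
  simpa [mu] using Finset.card_le_card hsub

lemma mu_mono {d : ℕ} {V W : Set (X → Bool)} (h : V ⊆ W) : mu d V ≤ mu d W := by
  classical
  apply Finset.card_le_card
  intro j hj
  simp only [Finset.mem_filter] at hj ⊢
  exact ⟨hj.1, ldimGe_mono_set h hj.2⟩

lemma ldimGe_of_mu {d : ℕ} {V : Set (X → Bool)} (h : 1 ≤ mu d V) :
    LdimGe V (mu d V - 1) := by
  by_contra hc
  have := mu_le (d := d) hc
  omega


-- new part
lemma nonempty_of_mu {d : ℕ} {V : Set (X → Bool)} (h : 1 ≤ mu d V) : V.Nonempty :=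
  nonempty_of_ldimGe_zero (ldimGe_mono_nat (Nat.zero_le _) (ldimGe_of_mu h))

lemma not_both {d : ℕ} {C V : Set (X → Bool)} (hC1 : ¬ LdimGe C (d + 1)) (hV : V ⊆ C)
    (h1 : 1 ≤ mu d V) {x : X}
    (ht : mu d (Vres V x true) = mu d V) (hf : mu d (Vres V x false) = mu d V) : False := by
  have l0 : LdimGe (Vres V x true) (mu d V - 1) := by
    have := ldimGe_of_mu (d := d) (V := Vres V x true) (by omega)
    rwa [ht] at this
  have l1 : LdimGe (Vres V x false) (mu d V - 1) := by
    have := ldimGe_of_mu (d := d) (V := Vres V x false) (by omega)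
    rwa [hf] at this
  have hsucc : LdimGe V (mu d V - 1 + 1) := ldimGe_succ l0 l1
  have heq : mu d V - 1 + 1 = mu d V := by omega
  rw [heq] at hsucc
  have hle : mu d V ≤ d := by
    by_contra h
    exact hC1 (ldimGe_mono_set hV (ldimGe_mono_nat (by omega) hsucc))
  have := le_mu hsucc hle
  omega

noncomputable def part (d : ℕ) (V : Set (X → Bool)) : X → Option Bool := fun x =>
  open scoped Classical in
  if mu d (Vres V x true) = mu d V then some true
  else if mu d (Vres V x false) = mu d V then some false else none

lemma part_some {d : ℕ} {V : Set (X → Bool)} {x : X} {b : Bool}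
    (h : part d V x = some b) : mu d (Vres V x b) = mu d V := by
  unfold part at h
  split_ifs at h with h1 h2 <;> simp_all

lemma mu_res_lt {d : ℕ} {C V : Set (X → Bool)} (hC1 : ¬ LdimGe C (d + 1)) (hV : V ⊆ C)
    (h1 : 1 ≤ mu d V) {x : X} {c : Bool} (hc : part d V x ≠ some c) :
    mu d (Vres V x c) < mu d V := by
  have hle : mu d (Vres V x c) ≤ mu d V := mu_mono (vres_subset V x c)
  rcases lt_or_eq_of_le hle with h | heq
  · exact h
  exfalso
  cases c with
  | true => exact hc (by unfold part; rw [if_pos heq])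
  | false =>
    by_cases ht : mu d (Vres V x true) = mu d V
    · exact not_both hC1 hV h1 ht heq
    · exact hc (by unfold part; rw [if_neg ht, if_pos heq])

lemma single_exists {d : ℕ} {V : Set (X → Bool)} (h1 : 1 ≤ mu d V) {x : X} {b : Bool}
    (h : part d V x = some b) : (Vres V x b).Nonempty :=
  nonempty_of_mu (by rw [part_some h]; omega)

lemma pair_exists {d : ℕ} {C V : Set (X → Bool)} (hC1 : ¬ LdimGe C (d + 1)) (hV : V ⊆ C)
    (h1 : 1 ≤ mu d V) (x y : X) :
    ∃ f ∈ V, (∀ b, part d V x = some b → f x = b) ∧ (∀ b, part d V y = some b → f y = b) := by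
  rcases hx : part d V x with _ | b
  · rcases hy : part d V y with _ | b'
    · obtain ⟨f, hf⟩ := nonempty_of_mu h1
      exact ⟨f, hf, fun b h => by simp_all, fun b h => by simp_all⟩
    · obtain ⟨f, hf⟩ := single_exists h1 hy
      exact ⟨f, hf.1, fun b h => by simp_all, fun b h => by cases h; exact hf.2⟩
  · rcases hy : part d V y with _ | b'
    · obtain ⟨f, hf⟩ := single_exists h1 hx
      exact ⟨f, hf.1, fun b h => by cases h; exact hf.2, fun b h => by simp_all⟩
    · -- both constrained
      have hint : ∃ f ∈ V, f x = b ∧ f y = b' := by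
        by_contra hno
        push_neg at hno
        have hsub : Vres V x b ⊆ Vres V y (!b') := by
          intro f hf
          refine ⟨hf.1, ?_⟩
          have := hno f hf.1 hf.2
          cases hfy : f y <;> cases b' <;> simp_all
        have h2 : mu d (Vres V y (!b')) = mu d V := by
          have hge : mu d V ≤ mu d (Vres V y (!b')) := by
            calc mu d V = mu d (Vres V x b) := (part_some hx).symm
            _ ≤ _ := mu_mono hsub
          exact le_antisymm (mu_mono (vres_subset _ _ _)) hge
        have h3 := part_some hy
        cases b' with
        | true => exact not_both hC1 hV h1 h3 (by simpa using h2)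
        | false => exact not_both hC1 hV h1 (by simpa using h2) h3
      obtain ⟨f, hf, hfx, hfy'⟩ := hint
      exact ⟨f, hf, fun c h => by cases h; exact hfx,
        fun c h => by cases h; exact hfy'⟩

lemma part_nconsistent {d : ℕ} {C V : Set (X → Bool)} (x₀ : X) (hC1 : ¬ LdimGe C (d + 1))
    (hV : V ⊆ C) (h1 : 1 ≤ mu d V) : NConsistent C (part d V) 2 := by
  classical
  intro s hs
  obtain ⟨x, y, hxy⟩ : ∃ x y : X, ∀ z ∈ s, z = x ∨ z = y := by
    rcases Nat.lt_or_ge s.card 2 with h | h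
    · rcases Nat.lt_or_ge s.card 1 with h0 | h0
      · exact ⟨x₀, x₀, fun z hz => absurd (Finset.card_pos.2 ⟨z, hz⟩) (by omega)⟩
      · have hone : s.card = 1 := by omega
        obtain ⟨a, rfl⟩ := Finset.card_eq_one.1 hone
        exact ⟨a, a, by simp⟩
    · have htwo : s.card = 2 := by omega
      obtain ⟨a, b, hab, hs2⟩ := Finset.card_eq_two.1 htwo
      refine ⟨a, b, fun z hz => ?_⟩
      rw [hs2] at hz
      simpa using hz
  obtain ⟨f, hf, hfx, hfy⟩ := pair_exists hC1 hV h1 x y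
  exact ⟨f, hV hf, fun z hz b hb => by rcases hxy z hz with rfl | rfl
                                       exacts [hfx b hb, hfy b hb]⟩


-- new part ----------------------------------------------------------------

noncomputable def hyp (H : Set (X → Bool)) (d : ℕ) (B₀ : X → Bool) (V : Set (X → Bool)) :
    X → Bool :=
  open scoped Classical in
  if h : ∃ B ∈ H, PExtends B (part d V) then h.choose else B₀

lemma hyp_mem {H : Set (X → Bool)} {d : ℕ} {B₀ : X → Bool} (hB₀ : B₀ ∈ H)
    (V : Set (X → Bool)) : hyp H d B₀ V ∈ H := by
  unfold hyp
  split_ifs with h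
  · exact h.choose_spec.1
  · exact hB₀

lemma hyp_extends {H : Set (X → Bool)} {d : ℕ} {B₀ : X → Bool} {V : Set (X → Bool)}
    (h : ∃ B ∈ H, PExtends B (part d V)) : PExtends (hyp H d B₀ V) (part d V) := by
  unfold hyp
  rw [dif_pos h]
  exact h.choose_spec.2

noncomputable def vstep (H : Set (X → Bool)) (d : ℕ) (B₀ : X → Bool)
    (V : Set (X → Bool)) (x : X) : Set (X → Bool) :=
  {f ∈ V | f x = !(hyp H d B₀ V x)}

noncomputable def verSp (C H : Set (X → Bool)) (d : ℕ) (B₀ : X → Bool)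
    (l : List X) : Set (X → Bool) :=
  l.foldl (vstep H d B₀) C

lemma foldl_vstep_subset {H : Set (X → Bool)} {d : ℕ} {B₀ : X → Bool} :
    ∀ (l : List X) (W : Set (X → Bool)), l.foldl (vstep H d B₀) W ⊆ W := by
  intro l
  induction l with
  | nil => intro W; simp
  | cons x l ih =>
    intro W
    refine (ih (vstep H d B₀ W x)).trans ?_
    intro f hf
    exact hf.1

lemma verSp_subset {C H : Set (X → Bool)} {d : ℕ} {B₀ : X → Bool} (l : List X) :
    verSp C H d B₀ l ⊆ C := foldl_vstep_subset l C

lemma invariant {C H : Set (X → Bool)} {d : ℕ} {B₀ : X → Bool} (x₀ : X)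
    (hC1 : ¬ LdimGe C (d + 1)) (hSC2 : SCDimLe C H 2)
    {g : X → Bool} (hg : g ∈ C) :
    ∀ xs : List X, ValidEQPlay g (fun l => hyp H d B₀ (verSp C H d B₀ l)) xs →
      g ∈ verSp C H d B₀ xs ∧ mu d (verSp C H d B₀ xs) + xs.length ≤ d + 1 := by
  intro xs
  induction xs using List.reverseRecOn with
  | nil =>
    intro _
    refine ⟨hg, ?_⟩
    have := mu_le (d := d) hC1
    simpa [verSp] using this
  | append_singleton l x ih =>
    intro hvalid
    have hvl : ValidEQPlay g (fun l => hyp H d B₀ (verSp C H d B₀ l)) l := by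
      intro i hi
      have hi' : i < (l ++ [x]).length := by simp; omega
      have := hvalid i hi'
      have ht : (l ++ [x]).take i = l.take i := List.take_append_of_le_length (le_of_lt hi)
      have hgeti : (l ++ [x]).get ⟨i, hi'⟩ = l.get ⟨i, hi⟩ := by
        simp [List.get_eq_getElem, List.getElem_append_left hi]
      rw [ht, hgeti] at this
      exact this
    obtain ⟨hgV, hmu⟩ := ih hvl
    set V := verSp C H d B₀ l with hVdef
    have hVC : V ⊆ C := verSp_subset l
    have h1 : 1 ≤ mu d V := by
      have h0 : LdimGe V 0 := ldimGe_zero x₀ ⟨g, hgV⟩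
      have := le_mu h0 (Nat.zero_le d)
      omega
    have hcons := part_nconsistent x₀ hC1 hVC h1
    have hexB : ∃ B ∈ H, PExtends B (part d V) := hSC2 _ hcons
    have hBext : PExtends (hyp H d B₀ V) (part d V) := hyp_extends hexB
    set B := hyp H d B₀ V with hBdef
    have hlen : l.length < (l ++ [x]).length := by simp
    have hlast := hvalid l.length hlen
    have htl : (l ++ [x]).take l.length = l := by
      rw [List.take_append_of_le_length (le_refl _), List.take_length]
    have hgl : (l ++ [x]).get ⟨l.length, hlen⟩ = x := by
      rw [List.get_eq_getElem]
      exact List.getElem_concat_length rfl _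
    rw [htl, hgl] at hlast
    have hlast' : B x ≠ g x := hlast
    have hgx : g x = !(B x) := by
      cases hBx : B x <;> cases hgx' : g x <;> simp_all
    have hres : verSp C H d B₀ (l ++ [x]) = Vres V x (!(B x)) := by
      rw [verSp, List.foldl_append]
      rfl
    have hpart : part d V x ≠ some (!(B x)) := by
      intro hp
      have h2 := hBext x _ hp
      cases hBx : B x <;> rw [hBx] at h2 <;> simp at h2
    have hlt := mu_res_lt hC1 hVC h1 hpart
    constructor
    · rw [hres]; exact ⟨hgV, hgx⟩
    · rw [hres]
      simp only [List.length_append, List.length_singleton]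
      omega

lemma eqlearn_upper {C H : Set (X → Bool)} {d : ℕ} (x₀ : X) {B₀ : X → Bool} (hB₀ : B₀ ∈ H)
    (hC1 : ¬ LdimGe C (d + 1)) (hSC2 : SCDimLe C H 2) : EQLearnIn C H (d + 1) := by
  refine ⟨fun l => hyp H d B₀ (verSp C H d B₀ l), fun l => hyp_mem hB₀ _, ?_⟩
  intro A hA xs hxs
  obtain ⟨hAV, hmu⟩ := invariant x₀ hC1 hSC2 hA xs hxs
  have h1 : 1 ≤ mu d (verSp C H d B₀ xs) := by
    have h0 : LdimGe (verSp C H d B₀ xs) 0 := ldimGe_zero x₀ ⟨A, hAV⟩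
    have := le_mu h0 (Nat.zero_le d)
    omega
  omega


def advPath (t : List Bool → X) (s : List X → X → Bool) : ℕ → List Bool
  | 0 => []
  | n + 1 =>
    let l := advPath t s n
    l ++ [!(s ((List.range n).map fun j => t (l.take j)) (t l))]

lemma advPath_length (t : List Bool → X) (s : List X → X → Bool) (n : ℕ) :
    (advPath t s n).length = n := by
  induction n with
  | zero => rfl
  | succ n ih => simp [advPath, ih]

lemma advPath_take (t : List Bool → X) (s : List X → X → Bool) :
    ∀ {j n : ℕ}, j ≤ n → (advPath t s n).take j = advPath t s j := by
  intro j n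
  induction n with
  | zero => intro hj; interval_cases j; rfl
  | succ n ih =>
    intro hj
    rcases Nat.lt_or_ge j (n + 1) with h | h
    · rw [advPath]
      show (advPath t s n ++ _).take j = _
      rw [List.take_append_of_le_length (by rw [advPath_length]; omega)]
      exact ih (by omega)
    · have hj' : j = n + 1 := by omega
      subst hj'
      exact List.take_of_length_le (by rw [advPath_length])

lemma eqlearn_lower {C H : Set (X → Bool)} {d : ℕ} (hLd : LdimGe C d) :
    ¬ EQLearnIn C H d := by
  rintro ⟨s, _, hwin⟩
  obtain ⟨t, ht⟩ := hLd
  set p := advPath t s with hp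
  have hplen : ∀ n, (p n).length = n := advPath_length t s
  have hptake : ∀ {j n : ℕ}, j ≤ n → (p n).take j = p j := fun h => advPath_take t s h
  have hpsucc : ∀ n, p (n + 1)
      = p n ++ [!(s ((List.range n).map fun j => t ((p n).take j)) (t (p n)))] :=
    fun n => rfl
  set xs : List X := (List.range d).map fun j => t (p j) with hxs
  have hxlen : xs.length = d := by simp [hxs]
  obtain ⟨g, hgC, hgk⟩ := ht (p d) (hplen d)
  have hvalid : ValidEQPlay g s xs := by
    intro i hi
    have hid : i < d := by omega
    have hget : xs.get ⟨i, hi⟩ = t (p i) := by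
      simp [hxs, List.get_eq_getElem]
    have htake : xs.take i = (List.range i).map fun j => t ((p i).take j) := by
      rw [hxs, ← List.map_take, List.take_range]
      have hmin : min i d = i := by omega
      rw [hmin]
      apply List.map_congr_left
      intro j hj
      have hji : j < i := List.mem_range.1 hj
      rw [hptake (by omega : j ≤ i)]
    have hbit : (p d).getD i false = !(s (xs.take i) (t (p i))) := by
      have h1 : (p d).getD i false = (p d)[i]'(by rw [hplen]; omega) :=
        List.getD_eq_getElem _ _ _
      have h2 : (p d)[i]'(by rw [hplen]; omega)
          = ((p d).take (i + 1))[i]'(by rw [List.length_take, hplen]; omega) := by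
        rw [List.getElem_take]
      rw [h1, h2, htake]
      have h5 : ∀ (hh : i < ((p d).take (i+1)).length), ((p d).take (i + 1))[i]'hh
          = !(s ((List.range i).map fun j => t ((p i).take j)) (t (p i))) := by
        rw [hptake (by omega : i + 1 ≤ d), hpsucc i]
        intro hh
        exact List.getElem_concat_length (hplen i).symm _
      exact h5 _
    have hgi : g (xs.get ⟨i, hi⟩) = !(s (xs.take i) (t (p i))) := by
      rw [hget]
      calc g (t (p i)) = g (t ((p d).take i)) := by rw [hptake (by omega : i ≤ d)]
        _ = (p d).getD i false := hgk i hid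
        _ = _ := hbit
    rw [hgi, hget]
    cases hb : s (xs.take i) (t (p i)) <;> simp
  have := hwin g hgC xs hvalid
  omega


lemma eqlearn_mono {C H : Set (X → Bool)} {m n : ℕ} (hmn : m ≤ n) (h : EQLearnIn C H m) :
    EQLearnIn C H n := by
  obtain ⟨s, h1, h2⟩ := h
  exact ⟨s, h1, fun A hA xs hxs => lt_of_lt_of_le (h2 A hA xs hxs) hmn⟩


end Stmt13Aux

open Stmt13Aux in
theorem stmt_13 {X : Type*} (C H : Set (X → Bool)) (hCH : C ⊆ H) (d : ℕ)
    (hd : Ldim C = (d : ℕ∞)) (hSC : SCDim C H = (2 : ℕ∞)) :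
    LCEQ C H = (d : ℕ∞) + 1 := by
  classical
  -- SCDim facts
  have hS1 : ¬ SCDimLe C H 1 := by
    intro h
    have hle : SCDim C H ≤ (1 : ℕ∞) := by
      apply sInf_le
      exact ⟨1, by norm_num, h⟩
    rw [hSC] at hle
    norm_num at hle
  have hSCle : SCDimLe C H 2 := by
    by_contra h
    have hmono : ∀ m : ℕ, SCDimLe C H m → 3 ≤ m := by
      intro m hm
      by_contra hm3
      push_neg at hm3
      exact h fun A hA => hm A fun s hs => hA s (hs.trans (by omega))
    have hge : (3 : ℕ∞) ≤ SCDim C H := by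
      apply le_sInf
      rintro n ⟨m, rfl, hm⟩
      exact_mod_cast hmono m hm
    rw [hSC] at hge
    norm_num at hge
  -- nonemptiness
  obtain ⟨A₁, hA₁, hnoext⟩ : ∃ A : X → Option Bool,
      NConsistent C A 1 ∧ ¬ ∃ B ∈ H, PExtends B A := by
    by_contra hno
    push_neg at hno
    exact hS1 fun A hA => hno A hA
  obtain ⟨f₀, hf₀⟩ : C.Nonempty := by
    obtain ⟨f, hf, -⟩ := hA₁ ∅ (by simp)
    exact ⟨f, hf⟩
  have hXne : Nonempty X := by
    by_contra hX
    exact hnoext ⟨f₀, hCH hf₀, fun x b _ => (hX ⟨x⟩).elim⟩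
  obtain ⟨x₀⟩ := hXne
  -- Ldim facts
  have hnotd1 : ¬ LdimGe C (d + 1) := by
    intro h
    have hle : ((d : ℕ∞) + 1) ≤ Ldim C := by
      apply le_sSup
      exact ⟨d + 1, by push_cast; ring, h⟩
    rw [hd] at hle
    have : (d : ℕ) + 1 ≤ d := by exact_mod_cast (by push_cast at hle ⊢; exact hle : ((d + 1 : ℕ) : ℕ∞) ≤ (d : ℕ∞))
    omega
  have hLdd : LdimGe C d := by
    rcases Nat.eq_zero_or_pos d with rfl | hdpos
    · exact ldimGe_zero x₀ ⟨f₀, hf₀⟩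
    · by_contra h
      have hub : Ldim C ≤ ((d - 1 : ℕ) : ℕ∞) := by
        apply sSup_le
        rintro n ⟨m, rfl, hm⟩
        have hmne : m ≠ d := fun e => h (e ▸ hm)
        have hmd : m ≤ d := by
          by_contra hmd
          push_neg at hmd
          exact hnotd1 (ldimGe_mono_nat (by omega) hm)
        exact_mod_cast (by omega : m ≤ d - 1)
      rw [hd] at hub
      have : d ≤ d - 1 := by exact_mod_cast hub
      omega
  have hub : EQLearnIn C H (d + 1) := eqlearn_upper x₀ (hCH hf₀) hnotd1 hSCle
  have hlb : ¬ EQLearnIn C H d := eqlearn_lower hLdd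
  apply le_antisymm
  · apply sInf_le
    exact ⟨d + 1, by push_cast; ring, hub⟩
  · apply le_sInf
    rintro n ⟨m, rfl, hm⟩
    have hdm : d + 1 ≤ m := by
      by_contra hdm
      push_neg at hdm
      exact hlb (eqlearn_mono (by omega) hm)
    exact_mod_cast (by exact_mod_cast hdm : ((d + 1 : ℕ) : ℕ∞) ≤ (m : ℕ∞))
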